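/- arXiv:2012.14310 — 7 statements merged into one kernel-verified Lean document; each statement's English description precedes it below -/
import Mathlib

section
/- Let (γ_n)_{n≥1} be a non-increasing positive sequence with limsup_n (γ_n − γ_{n+1})/γ_{n+1}^2 = ϖ < ∞, and let ρ > ϖ. Define Γ_n = γ_1 + ⋯ + γ_n and u_n = Σ_{k=1}^n γ_k^2 e^{−ρ(Γ_n − Γ_k)}. Then limsup_n u_n/γ_n < ∞. -/
open Filter

private lemma tele_aux (g : ℕ → ℝ) (n : ℕ) :
    ∑ k ∈ Finset.Icc 1 n, (g k - g (k - 1)) = g n - g 0 := by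
  induction n with
  | zero => simp
  | succ n ih =>
    rw [Finset.sum_Icc_succ_top (Nat.succ_le_succ (Nat.zero_le n)), ih]
    simp

/-- Let `(γ_n)_{n≥1}` be a non-increasing positive sequence with
`limsup (γ_n − γ_{n+1})/γ_{n+1}^2 = ϖ < ∞`, and `ρ > ϖ`. With
`Γ_n = γ_1 + ⋯ + γ_n` and `u_n = Σ_{k=1}^n γ_k^2 e^{−ρ(Γ_n − Γ_k)}`,
one has `limsup u_n/γ_n < ∞`. -/
theorem stmt_0 (γ : ℕ → ℝ) (hpos : ∀ n, 1 ≤ n → 0 < γ n)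
    (hmono : ∀ n, 1 ≤ n → γ (n + 1) ≤ γ n)
    (ϖ ρ : ℝ)
    (hbdd : IsBoundedUnder (· ≤ ·) atTop (fun n => (γ n - γ (n + 1)) / γ (n + 1) ^ 2))
    (hϖ : limsup (fun n => (γ n - γ (n + 1)) / γ (n + 1) ^ 2) atTop = ϖ)
    (hρ : ϖ < ρ) :
    IsBoundedUnder (· ≤ ·) atTop
      (fun n => (∑ k ∈ Finset.Icc 1 n, γ k ^ 2 *
          Real.exp (-ρ * ((∑ j ∈ Finset.Icc 1 n, γ j) - ∑ j ∈ Finset.Icc 1 k, γ j))) / γ n) := by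
  set Γ : ℕ → ℝ := fun n => ∑ j ∈ Finset.Icc 1 n, γ j with hΓdef
  have hΓmono : ∀ m n : ℕ, m ≤ n → Γ m ≤ Γ n := by
    intro m n hmn
    apply Finset.sum_le_sum_of_subset_of_nonneg (Finset.Icc_subset_Icc_right hmn)
    intro i hi _
    exact (hpos i (Finset.mem_Icc.mp hi).1).le
  have hΓsucc : ∀ n : ℕ, Γ (n + 1) = Γ n + γ (n + 1) := by
    intro n
    exact Finset.sum_Icc_succ_top (Nat.succ_le_succ (Nat.zero_le n)) γ
  have hmono' : ∀ m k : ℕ, 1 ≤ m → m ≤ k → γ k ≤ γ m := by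
    intro m k hm hmk
    induction k, hmk using Nat.le_induction with
    | base => exact le_rfl
    | succ n hn ih => exact (hmono n (hm.trans hn)).trans ih
  -- ϖ ≥ 0
  have hϖ0 : 0 ≤ ϖ := by
    rw [← hϖ]
    apply le_limsup_of_frequently_le _ hbdd
    apply Eventually.frequently
    filter_upwards [eventually_ge_atTop 1] with n hn
    exact div_nonneg (sub_nonneg.mpr (hmono n hn)) (sq_nonneg _)
  have hρ0 : 0 < ρ := lt_of_le_of_lt hϖ0 hρ
  set ρ' : ℝ := (ϖ + ρ) / 2 with hρ'def
  have hρ'0 : 0 ≤ ρ' := by simp only [hρ'def]; linarith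
  have hρ'lt : ρ' < ρ := by simp only [hρ'def]; linarith
  set c : ℝ := ρ - ρ' with hcdef
  have hc : 0 < c := by simp only [hcdef]; linarith
  -- eventually the limsup bound holds
  have hev : ∀ᶠ n in atTop, (γ n - γ (n + 1)) / γ (n + 1) ^ 2 < ρ' := by
    apply eventually_lt_of_limsup_lt _ hbdd
    rw [hϖ]; simp only [hρ'def]; linarith
  obtain ⟨N₀, hN₀⟩ := eventually_atTop.mp hev
  set N : ℕ := max N₀ 1 with hNdef
  have hN1 : 1 ≤ N := le_max_right _ _
  have hstep : ∀ m : ℕ, N ≤ m → γ m ≤ γ (m + 1) * Real.exp (ρ' * γ (m + 1)) := by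
    intro m hm
    have h1 := hN₀ m ((le_max_left _ _).trans hm)
    have hp : 0 < γ (m + 1) := hpos (m + 1) (Nat.succ_le_succ (Nat.zero_le m))
    have h2 : γ m - γ (m + 1) < ρ' * γ (m + 1) ^ 2 := by
      rw [div_lt_iff₀ (by positivity)] at h1; linarith [h1]
    have h3 : 1 + ρ' * γ (m + 1) ≤ Real.exp (ρ' * γ (m + 1)) := by
      linarith [Real.add_one_le_exp (ρ' * γ (m + 1))]
    nlinarith [h2, h3, hp.le]
  have keyA : ∀ k, N ≤ k → ∀ n, k ≤ n → γ k ≤ γ n * Real.exp (ρ' * (Γ n - Γ k)) := by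
    intro k hk n hn
    induction n, hn using Nat.le_induction with
    | base => simp
    | succ n hn ih =>
      calc γ k ≤ γ n * Real.exp (ρ' * (Γ n - Γ k)) := ih
        _ ≤ (γ (n + 1) * Real.exp (ρ' * γ (n + 1))) * Real.exp (ρ' * (Γ n - Γ k)) :=
            mul_le_mul_of_nonneg_right (hstep n (hk.trans hn)) (Real.exp_nonneg _)
        _ = γ (n + 1) * Real.exp (ρ' * (Γ (n + 1) - Γ k)) := by
            rw [hΓsucc, mul_assoc, ← Real.exp_add]; ring_nf
  -- telescoping bound
  have keyB : ∀ n : ℕ, ∑ k ∈ Finset.Icc 1 n, γ k * Real.exp (-c * (Γ n - Γ k)) ≤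
      Real.exp (c * γ 1) / c := by
    intro n
    have hterm : ∀ k ∈ Finset.Icc 1 n, γ k * Real.exp (-c * (Γ n - Γ k)) ≤
        (Real.exp (c * γ 1) / c) *
          (Real.exp (-c * (Γ n - Γ k)) - Real.exp (-c * (Γ n - Γ (k - 1)))) := by
      intro k hk
      obtain ⟨hk1, _⟩ := Finset.mem_Icc.mp hk
      obtain ⟨m, rfl⟩ := Nat.exists_eq_add_of_le hk1
      have hkk : 1 + m - 1 = m := by omega
      rw [hkk]
      have hΓm : Γ (1 + m) = Γ m + γ (1 + m) := by
        rw [Nat.add_comm 1 m]; exact hΓsucc m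
      have hgp : 0 < γ (1 + m) := hpos _ (by omega)
      have hg1 : γ (1 + m) ≤ γ 1 := hmono' 1 (1 + m) le_rfl (by omega)
      have hsplit : Real.exp (-c * (Γ n - Γ m)) =
          Real.exp (-c * (Γ n - Γ (1 + m))) * Real.exp (-(c * γ (1 + m))) := by
        rw [← Real.exp_add, hΓm]; ring_nf
      rw [hsplit]
      have hE : (0:ℝ) < Real.exp (-c * (Γ n - Γ (1 + m))) := Real.exp_pos _
      rw [show (Real.exp (c * γ 1) / c) *
          (Real.exp (-c * (Γ n - Γ (1 + m))) -
            Real.exp (-c * (Γ n - Γ (1 + m))) * Real.exp (-(c * γ (1 + m)))) =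
          Real.exp (-c * (Γ n - Γ (1 + m))) *
            ((Real.exp (c * γ 1) / c) * (1 - Real.exp (-(c * γ (1 + m))))) by ring]
      rw [show γ (1 + m) * Real.exp (-c * (Γ n - Γ (1 + m))) =
          Real.exp (-c * (Γ n - Γ (1 + m))) * γ (1 + m) by ring]
      apply mul_le_mul_of_nonneg_left _ hE.le
      -- need: γ (1+m) ≤ (exp(c γ1)/c) * (1 - exp(-(c γ(1+m))))
      have h1 : c * γ (1 + m) + 1 ≤ Real.exp (c * γ (1 + m)) :=
        Real.add_one_le_exp _
      have h2 : Real.exp (c * γ (1 + m)) ≤ Real.exp (c * γ 1) :=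
        Real.exp_le_exp.mpr (by nlinarith [hc.le])
      have h3 : Real.exp (-(c * γ (1 + m))) * Real.exp (c * γ (1 + m)) = 1 := by
        rw [← Real.exp_add]; simp
      have h4 : Real.exp (-(c * γ (1 + m))) ≤ 1 := by
        rw [Real.exp_le_one_iff]; nlinarith [hc.le]
      have h5 : (0:ℝ) < Real.exp (-(c * γ (1 + m))) := Real.exp_pos _
      rw [div_mul_eq_mul_div, le_div_iff₀ hc]
      nlinarith [h1, h2, h3, h4, h5]
    calc ∑ k ∈ Finset.Icc 1 n, γ k * Real.exp (-c * (Γ n - Γ k))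
        ≤ ∑ k ∈ Finset.Icc 1 n, (Real.exp (c * γ 1) / c) *
            (Real.exp (-c * (Γ n - Γ k)) - Real.exp (-c * (Γ n - Γ (k - 1)))) :=
          Finset.sum_le_sum hterm
      _ = (Real.exp (c * γ 1) / c) * ∑ k ∈ Finset.Icc 1 n,
            (Real.exp (-c * (Γ n - Γ k)) - Real.exp (-c * (Γ n - Γ (k - 1)))) := by
          rw [Finset.mul_sum]
      _ ≤ Real.exp (c * γ 1) / c := by
          have htel : (∑ k ∈ Finset.Icc 1 n,
              (Real.exp (-c * (Γ n - Γ k)) - Real.exp (-c * (Γ n - Γ (k - 1))))) =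
              Real.exp (-c * (Γ n - Γ n)) - Real.exp (-c * (Γ n - Γ 0)) :=
            tele_aux (fun k => Real.exp (-c * (Γ n - Γ k))) n
          rw [htel]
          have h1 : Real.exp (-c * (Γ n - Γ n)) = 1 := by simp
          have h2 : (0:ℝ) < Real.exp (-c * (Γ n - Γ 0)) := Real.exp_pos _
          have h3 : (0:ℝ) ≤ Real.exp (c * γ 1) / c := by positivity
          nlinarith [h1, h2, h3]
  -- final bound
  set C : ℝ := (∑ k ∈ Finset.Icc 1 (N - 1), γ k ^ 2) / γ N with hCdef
  refine ⟨Real.exp (c * γ 1) / c + C, ?_⟩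
  rw [eventually_map]
  filter_upwards [eventually_ge_atTop N] with n hn
  show (∑ k ∈ Finset.Icc 1 n, γ k ^ 2 * Real.exp (-ρ * (Γ n - Γ k))) / γ n ≤
    Real.exp (c * γ 1) / c + C
  have hγn : 0 < γ n := hpos n (hN1.trans hn)
  have hγN : 0 < γ N := hpos N hN1
  -- exp bound for early terms
  have hearly : ∀ k, k ≤ N → Real.exp (-ρ * (Γ n - Γ k)) ≤ γ n / γ N := by
    intro k hkN
    have hA := keyA N le_rfl n hn
    have h1 : Real.exp (-(ρ' * (Γ n - Γ N))) ≤ γ n / γ N := by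
      rw [le_div_iff₀ hγN]
      have h0 := mul_le_mul_of_nonneg_left hA (Real.exp_nonneg (-(ρ' * (Γ n - Γ N))))
      have hx : Real.exp (-(ρ' * (Γ n - Γ N))) * Real.exp (ρ' * (Γ n - Γ N)) = 1 := by
        rw [← Real.exp_add]; simp
      nlinarith [h0, hx, hγn]
    have hk1 : Γ k ≤ Γ N := hΓmono k N hkN
    have hk2 : Γ N ≤ Γ n := hΓmono N n hn
    have h2 : -ρ * (Γ n - Γ k) ≤ -(ρ' * (Γ n - Γ N)) := by
      have : ρ' * (Γ n - Γ N) ≤ ρ * (Γ n - Γ k) :=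
        mul_le_mul hρ'lt.le (by linarith) (by linarith) hρ0.le
      linarith
    exact (Real.exp_le_exp.mpr h2).trans h1
  -- split the sum
  have hIoc : ∀ m : ℕ, Finset.Icc 1 m = Finset.Ioc 0 m := by
    intro m; ext x; simp only [Finset.mem_Icc, Finset.mem_Ioc]; omega
  have hsplit : (∑ k ∈ Finset.Ioc 0 (N - 1), γ k ^ 2 * Real.exp (-ρ * (Γ n - Γ k))) +
      ∑ k ∈ Finset.Ioc (N - 1) n, γ k ^ 2 * Real.exp (-ρ * (Γ n - Γ k)) =
      ∑ k ∈ Finset.Ioc 0 n, γ k ^ 2 * Real.exp (-ρ * (Γ n - Γ k)) :=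
    Finset.sum_Ioc_consecutive _ (Nat.zero_le (N - 1)) (by omega)
  have e1 : ∑ k ∈ Finset.Ioc 0 (N - 1), γ k ^ 2 * Real.exp (-ρ * (Γ n - Γ k)) ≤
      (∑ k ∈ Finset.Icc 1 (N - 1), γ k ^ 2) * (γ n / γ N) := by
    calc ∑ k ∈ Finset.Ioc 0 (N - 1), γ k ^ 2 * Real.exp (-ρ * (Γ n - Γ k))
        ≤ ∑ k ∈ Finset.Ioc 0 (N - 1), γ k ^ 2 * (γ n / γ N) := by
          apply Finset.sum_le_sum
          intro k hk
          obtain ⟨hk1, hk2⟩ := Finset.mem_Ioc.mp hk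
          exact mul_le_mul_of_nonneg_left (hearly k (by omega)) (sq_nonneg _)
      _ = (∑ k ∈ Finset.Ioc 0 (N - 1), γ k ^ 2) * (γ n / γ N) :=
          (Finset.sum_mul _ _ _).symm
      _ = (∑ k ∈ Finset.Icc 1 (N - 1), γ k ^ 2) * (γ n / γ N) := by rw [hIoc]
  have e2 : ∑ k ∈ Finset.Ioc (N - 1) n, γ k ^ 2 * Real.exp (-ρ * (Γ n - Γ k)) ≤
      γ n * (Real.exp (c * γ 1) / c) := by
    have step1 : ∑ k ∈ Finset.Ioc (N - 1) n, γ k ^ 2 * Real.exp (-ρ * (Γ n - Γ k)) ≤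
        ∑ k ∈ Finset.Ioc (N - 1) n, γ n * (γ k * Real.exp (-c * (Γ n - Γ k))) := by
      apply Finset.sum_le_sum
      intro k hk
      obtain ⟨hk1, hk2⟩ := Finset.mem_Ioc.mp hk
      have hkN : N ≤ k := by omega
      have hA := keyA k hkN n hk2
      have hγk : 0 < γ k := hpos k (by omega)
      calc γ k ^ 2 * Real.exp (-ρ * (Γ n - Γ k))
          = γ k * Real.exp (-ρ * (Γ n - Γ k)) * γ k := by ring
        _ ≤ γ k * Real.exp (-ρ * (Γ n - Γ k)) * (γ n * Real.exp (ρ' * (Γ n - Γ k))) :=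
            mul_le_mul_of_nonneg_left hA (by positivity)
        _ = γ n * (γ k * Real.exp (-c * (Γ n - Γ k))) := by
            rw [show -c * (Γ n - Γ k) = ρ' * (Γ n - Γ k) + -ρ * (Γ n - Γ k) by
              simp only [hcdef]; ring, Real.exp_add]
            ring
    have step2 : ∑ k ∈ Finset.Ioc (N - 1) n, γ n * (γ k * Real.exp (-c * (Γ n - Γ k))) ≤
        γ n * (Real.exp (c * γ 1) / c) := by
      rw [← Finset.mul_sum]
      apply mul_le_mul_of_nonneg_left _ hγn.le
      refine le_trans ?_ (keyB n)
      apply Finset.sum_le_sum_of_subset_of_nonneg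
      · rw [hIoc n]
        intro x hx
        simp only [Finset.mem_Ioc] at *
        omega
      · intro i hi _
        have : 0 < γ i := hpos i (Finset.mem_Icc.mp hi).1
        positivity
    exact step1.trans step2
  have e3 : (∑ k ∈ Finset.Icc 1 (N - 1), γ k ^ 2) * (γ n / γ N) = C * γ n := by
    rw [hCdef]; ring
  rw [div_le_iff₀ hγn, hIoc n, ← hsplit]
  linarith [e1, e2, e3]
end

section
/- Let (γ_n)_{n≥1} be a non-increasing positive sequence with Σ_n γ_n = ∞ and ϖ := limsup_n (γ_n − γ_{n+1})/γ_{n+1}^2 < ∞. Let ρ > ϖ and a ∈ (0, ρ/ϖ) (any a > 0 if ϖ = 0). Then e^{−ρ Γ_n} = o(γ_n^a) as n → ∞, where Γ_n = γ_1 + ⋯ + γ_n. -/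
open Filter Asymptotics

/-- For a non-increasing positive sequence with divergent sum and
`ϖ = limsup (γ_n − γ_{n+1})/γ_{n+1}^2 < ∞`, if `ρ > ϖ`, `a > 0` and `a·ϖ < ρ`
(i.e. `a ∈ (0, ρ/ϖ)`, any `a > 0` if `ϖ = 0`), then `e^{−ρΓ_n} = o(γ_n^a)`. -/
theorem stmt_1 (γ : ℕ → ℝ) (hpos : ∀ n, 1 ≤ n → 0 < γ n)
    (hmono : ∀ n, 1 ≤ n → γ (n + 1) ≤ γ n)
    (hdiv : Tendsto (fun n => ∑ k ∈ Finset.Icc 1 n, γ k) atTop atTop)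
    (ϖ ρ a : ℝ)
    (hbdd : IsBoundedUnder (· ≤ ·) atTop (fun n => (γ n - γ (n + 1)) / γ (n + 1) ^ 2))
    (hϖ : limsup (fun n => (γ n - γ (n + 1)) / γ (n + 1) ^ 2) atTop = ϖ)
    (hρ : ϖ < ρ) (ha : 0 < a) (haϖ : a * ϖ < ρ) :
    (fun n => Real.exp (-ρ * ∑ k ∈ Finset.Icc 1 n, γ k)) =o[atTop] (fun n => γ n ^ a) := by
  set S : ℕ → ℝ := fun n => ∑ k ∈ Finset.Icc 1 n, γ k with hS
  obtain ⟨c, hcϖ, hac⟩ : ∃ c, ϖ < c ∧ a * c < ρ := by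
    refine ⟨ϖ + (ρ - a * ϖ) / (2 * a), ?_, ?_⟩
    · have hε : 0 < (ρ - a * ϖ) / (2 * a) := div_pos (by linarith) (by linarith)
      linarith
    · have h1 : a * ((ρ - a * ϖ) / (2 * a)) = (ρ - a * ϖ) / 2 := by
        field_simp
      rw [mul_add, h1]; linarith
  have hev : ∀ᶠ n in atTop, (γ n - γ (n + 1)) / γ (n + 1) ^ 2 ≤ c := by
    have := eventually_lt_of_limsup_lt (hϖ ▸ hcϖ) hbdd
    exact this.mono fun n h => h.le
  obtain ⟨N0, hN0⟩ := eventually_atTop.mp hev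
  set N : ℕ := max N0 1 with hNdef
  have hN1 : 1 ≤ N := le_max_right _ _
  have hNbd : ∀ n, N ≤ n → (γ n - γ (n + 1)) / γ (n + 1) ^ 2 ≤ c :=
    fun n hn => hN0 n (le_trans (le_max_left _ _) hn)
  -- key summation bound
  have key : ∀ n, N ≤ n → Real.log (γ N) - Real.log (γ n) ≤ c * (S n - S N) := by
    intro n hn
    induction n, hn using Nat.le_induction with
    | base => simp
    | succ n hn ih =>
      have hn1 : 1 ≤ n := le_trans hN1 hn
      have h1 : 0 < γ n := hpos n hn1
      have h2 : 0 < γ (n + 1) := hpos (n + 1) (le_trans hn1 (Nat.le_succ n))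
      have hstep : Real.log (γ n) - Real.log (γ (n + 1)) ≤ c * γ (n + 1) := by
        have hl := Real.log_le_sub_one_of_pos (div_pos h1 h2)
        rw [Real.log_div h1.ne' h2.ne'] at hl
        have heq : γ n / γ (n + 1) - 1 = ((γ n - γ (n + 1)) / γ (n + 1) ^ 2) * γ (n + 1) := by
          field_simp
        have hb : ((γ n - γ (n + 1)) / γ (n + 1) ^ 2) * γ (n + 1) ≤ c * γ (n + 1) :=
          mul_le_mul_of_nonneg_right (hNbd n hn) h2.le
        rw [heq] at hl; linarith [hl, hb]
      have hSsucc : S (n + 1) = S n + γ (n + 1) := by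
        simp only [hS]
        rw [Finset.sum_Icc_succ_top (Nat.one_le_iff_ne_zero.mpr (Nat.succ_ne_zero n))]
      rw [hSsucc]
      linarith
  -- tendsto of exponent to -infinity
  have htends : Tendsto (fun n => -ρ * S n - a * Real.log (γ n)) atTop atBot := by
    have hbound : Tendsto (fun n => (a * c - ρ) * S n + (a * c * (- S N) - a * Real.log (γ N))) atTop atBot := by
      apply tendsto_atBot_add_const_right
      exact Tendsto.const_mul_atTop_of_neg (by linarith) hdiv
    apply tendsto_atBot_mono' _ _ hbound
    filter_upwards [eventually_ge_atTop N] with n hn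
    have := key n hn
    nlinarith [this, ha.le]
  -- convert to little-o
  have hgpos : ∀ᶠ n in atTop, 0 < γ n := by
    filter_upwards [eventually_ge_atTop 1] with n hn using hpos n hn
  rw [isLittleO_iff_tendsto']
  · apply Tendsto.congr' _ ((Real.tendsto_exp_atBot).comp htends)
    filter_upwards [hgpos] with n hn
    simp only [Function.comp_apply]
    rw [Real.rpow_def_of_pos hn, ← Real.exp_sub]
    congr 1; simp only [hS]; ring
  · filter_upwards [hgpos] with n hn h
    exact absurd h (Real.rpow_pos_of_pos hn a).ne'
end

section
/- Let (γ_n)_{n≥1} be a non-increasing positive sequence with Σ_n γ_n = ∞, lim_n γ_n = 0, and ϖ := limsup_n (γ_n − γ_{n+1})/γ_{n+1}^2 < ∞. For t ≥ 0 set N(t) = max{k ≥ 0 : Γ_k ≤ t}, where Γ_n = γ_1 + ⋯ + γ_n. Then for every T > 0, limsup_n γ_{N(Γ_n − T)}/γ_n < ∞. -/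
open Filter

/-- For a non-increasing positive step sequence with `γ_n → 0`, `ΣΓ_n = ∞` and
`ϖ = limsup (γ_n − γ_{n+1})/γ_{n+1}^2 < ∞`, setting `N(t) = max{k : Γ_k ≤ t}`,
for every `T > 0` one has `limsup γ_{N(Γ_n − T)}/γ_n < ∞`. -/
theorem stmt_2 (γ : ℕ → ℝ) (hpos : ∀ n, 1 ≤ n → 0 < γ n)
    (hmono : ∀ n, 1 ≤ n → γ (n + 1) ≤ γ n)
    (hlim : Tendsto γ atTop (nhds 0))
    (hdiv : Tendsto (fun n => ∑ k ∈ Finset.Icc 1 n, γ k) atTop atTop)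
    (hbdd : IsBoundedUnder (· ≤ ·) atTop (fun n => (γ n - γ (n + 1)) / γ (n + 1) ^ 2))
    (T : ℝ) (hT : 0 < T) :
    IsBoundedUnder (· ≤ ·) atTop
      (fun n => γ (sSup {k : ℕ |
          (∑ j ∈ Finset.Icc 1 k, γ j) ≤ (∑ j ∈ Finset.Icc 1 n, γ j) - T}) / γ n) := by
  set Γ : ℕ → ℝ := fun n => ∑ j ∈ Finset.Icc 1 n, γ j with hΓdef
  have hΓsucc : ∀ n : ℕ, Γ (n + 1) = Γ n + γ (n + 1) := by
    intro n
    simp only [hΓdef]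
    exact Finset.sum_Icc_succ_top (Nat.succ_le_succ (Nat.zero_le n)) γ
  have hΓmono : ∀ a b : ℕ, a ≤ b → Γ a ≤ Γ b := by
    intro a b hab
    apply Finset.sum_le_sum_of_subset_of_nonneg
    · exact Finset.Icc_subset_Icc_right hab
    · intro i hi _
      exact (hpos i (Finset.mem_Icc.1 hi).1).le
  -- antitone of γ on [1, ∞)
  have hanti : ∀ a : ℕ, 1 ≤ a → ∀ b : ℕ, a ≤ b → γ b ≤ γ a := by
    intro a ha b hb
    induction b, hb using Nat.le_induction with
    | base => exact le_rfl
    | succ n hn ih => exact (hmono n (ha.trans hn)).trans ih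
  obtain ⟨C₀, hC₀⟩ := hbdd
  rw [eventually_map] at hC₀
  obtain ⟨n₀, hn₀⟩ := eventually_atTop.1 hC₀
  set C : ℝ := max C₀ 0 with hCdef
  have hC0 : 0 ≤ C := le_max_right _ _
  set n₁ : ℕ := max n₀ 1 with hn₁def
  have hn₁1 : 1 ≤ n₁ := le_max_right _ _
  -- step bound
  have hstep : ∀ k : ℕ, n₁ ≤ k → γ k ≤ γ (k + 1) * Real.exp (C * γ (k + 1)) := by
    intro k hk
    have hk1 : 1 ≤ k := hn₁1.trans hk
    have hγp : 0 < γ (k + 1) := hpos _ (by omega)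
    have h := hn₀ k ((le_max_left _ _).trans hk)
    have h' : γ k - γ (k + 1) ≤ C * γ (k + 1) ^ 2 := by
      have h2 := (div_le_iff₀ (by positivity)).1 (h.trans (le_max_left C₀ 0))
      linarith
    have h3 : γ k ≤ γ (k + 1) * (1 + C * γ (k + 1)) := by nlinarith
    have h4 : 1 + C * γ (k + 1) ≤ Real.exp (C * γ (k + 1)) := by
      have := Real.add_one_le_exp (C * γ (k + 1))
      linarith
    calc γ k ≤ γ (k + 1) * (1 + C * γ (k + 1)) := h3
      _ ≤ γ (k + 1) * Real.exp (C * γ (k + 1)) :=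
        mul_le_mul_of_nonneg_left h4 hγp.le
  -- key comparison lemma
  have key : ∀ m : ℕ, n₁ ≤ m → ∀ n : ℕ, m ≤ n →
      γ m ≤ γ n * Real.exp (C * (Γ n - Γ m)) := by
    intro m hm n hn
    induction n, hn using Nat.le_induction with
    | base => simp
    | succ n hn ih =>
      have h1 : γ n ≤ γ (n + 1) * Real.exp (C * γ (n + 1)) := hstep n (hm.trans hn)
      calc γ m ≤ γ n * Real.exp (C * (Γ n - Γ m)) := ih
        _ ≤ γ (n + 1) * Real.exp (C * γ (n + 1)) * Real.exp (C * (Γ n - Γ m)) :=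
          mul_le_mul_of_nonneg_right h1 (Real.exp_nonneg _)
        _ = γ (n + 1) * Real.exp (C * (Γ (n + 1) - Γ m)) := by
          rw [hΓsucc n, mul_assoc, ← Real.exp_add]
          ring_nf
  -- conclusion
  refine ⟨Real.exp (C * (T + γ 1)), eventually_map.2 ?_⟩
  have hev : ∀ᶠ n : ℕ in atTop, Γ n₁ + T ≤ Γ n := hdiv.eventually_ge_atTop _
  filter_upwards [hev, eventually_ge_atTop 1] with n hΓn hn1
  set S : Set ℕ := {k : ℕ | Γ k ≤ Γ n - T} with hSdef
  have hne : S.Nonempty := ⟨n₁, by simp only [hSdef, Set.mem_setOf_eq]; linarith⟩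
  have hbddS : BddAbove S := by
    obtain ⟨M, hM⟩ := eventually_atTop.1 (hdiv.eventually_gt_atTop (Γ n - T))
    refine ⟨M, fun k hk => ?_⟩
    by_contra hkM
    exact absurd hk (not_le.2 (hM k (le_of_not_ge hkM)))
  set m : ℕ := sSup S with hmdef
  have hmS : m ∈ S := Nat.sSup_mem hne hbddS
  have hmΓ : Γ m ≤ Γ n - T := hmS
  have hm_ge : n₁ ≤ m := le_csSup hbddS (by simp only [hSdef, Set.mem_setOf_eq]; linarith)
  have hm_lt : m ≤ n := by
    by_contra h
    have := hΓmono n m (le_of_not_ge h)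
    linarith
  have hm1 : Γ n - T < Γ (m + 1) := by
    by_contra h
    have : m + 1 ∈ S := le_of_not_gt h
    have := le_csSup hbddS this
    omega
  have hgap : Γ n - Γ m < T + γ 1 := by
    have h1 : γ (m + 1) ≤ γ 1 := hanti 1 le_rfl (m + 1) (by omega)
    have h2 := hΓsucc m
    linarith
  have hγn : 0 < γ n := hpos n hn1
  have hkey := key m hm_ge n hm_lt
  have hexp : Real.exp (C * (Γ n - Γ m)) ≤ Real.exp (C * (T + γ 1)) :=
    Real.exp_le_exp.2 (mul_le_mul_of_nonneg_left hgap.le hC0)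
  have : γ m ≤ γ n * Real.exp (C * (T + γ 1)) :=
    hkey.trans (mul_le_mul_of_nonneg_left hexp hγn.le)
  rw [div_le_iff₀ hγn, mul_comm]
  exact this
end

section
/- Suppose there exists c > 0 and n_0 such that for all n ≥ n_0, γ_n/γ_{n+1} ≤ e^{c γ_{n+1}}. Then the sequence v_n defined by v_0 = 0 and v_{n+1} = v_n (γ_n/γ_{n+1}) e^{−ρ γ_{n+1}} + γ_{n+1} is bounded whenever ρ > c and the γ_n are positive, non-increasing with Σγ_n = ∞. -/
open Filter

/-- If for some `c > 0` and `n₀`, `γ_n/γ_{n+1} ≤ e^{cγ_{n+1}}` for all `n ≥ n₀`,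
then the sequence defined by `v_0 = 0`, `v_{n+1} = v_n (γ_n/γ_{n+1}) e^{−ργ_{n+1}} + γ_{n+1}`
is bounded whenever `ρ > c` and `(γ_n)` is positive, non-increasing with `Σγ_n = ∞`. -/
theorem stmt_3 (γ : ℕ → ℝ) (ρ c : ℝ) (n₀ : ℕ)
    (hpos : ∀ n, 1 ≤ n → 0 < γ n)
    (hmono : ∀ n, 1 ≤ n → γ (n + 1) ≤ γ n)
    (hdiv : Tendsto (fun n => ∑ k ∈ Finset.Icc 1 n, γ k) atTop atTop)
    (hc : 0 < c) (hρ : c < ρ)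
    (hratio : ∀ n, n₀ ≤ n → γ n / γ (n + 1) ≤ Real.exp (c * γ (n + 1)))
    (v : ℕ → ℝ) (hv0 : v 0 = 0)
    (hvrec : ∀ n, v (n + 1) = v n * (γ n / γ (n + 1)) * Real.exp (-ρ * γ (n + 1)) + γ (n + 1)) :
    ∃ M : ℝ, ∀ n, |v n| ≤ M := by
  have hδ : (0:ℝ) < ρ - c := by linarith
  set δ := ρ - c with hδdef
  -- nonnegativity of v
  have hvnn : ∀ n, 0 ≤ v n := by
    intro n
    induction n with
    | zero => simp [hv0]
    | succ n ih =>
      rw [hvrec n]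
      rcases Nat.eq_zero_or_pos n with h | h
      · subst h
        have := (hpos 1 le_rfl).le
        simp [hv0]; linarith
      · have h1 : 0 < γ n := hpos n h
        have h2 : 0 < γ (n + 1) := hpos (n + 1) (by omega)
        positivity
  -- γ m ≤ γ 1 for m ≥ 1
  have hle1 : ∀ m, 1 ≤ m → γ m ≤ γ 1 := by
    intro m hm
    induction m with
    | zero => omega
    | succ m ih =>
      rcases Nat.eq_zero_or_pos m with h | h
      · subst h; exact le_rfl
      · exact le_trans (hmono m h) (ih h)
  set N := max n₀ 1 with hN
  set G := γ 1 with hG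
  set B := max (v N) (Real.exp (δ * G) / δ) with hB
  have hBge : Real.exp (δ * G) / δ ≤ B := le_max_right _ _
  -- key step
  have key : ∀ x g : ℝ, 0 ≤ x → x ≤ B → 0 < g → g ≤ G →
      x * Real.exp (-(δ * g)) + g ≤ B := by
    intro x g hx hxB hg hgG
    have he : Real.exp (-(δ * g)) ≤ 1 := by
      rw [Real.exp_le_one_iff]
      nlinarith
    have h1 : x * Real.exp (-(δ * g)) ≤ B * Real.exp (-(δ * g)) := by
      have := Real.exp_pos (-(δ * g))
      nlinarith
    have h2 : g ≤ B * (1 - Real.exp (-(δ * g))) := by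
      have hexp : 1 + δ * g ≤ Real.exp (δ * g) := by linarith [Real.add_one_le_exp (δ * g)]
      -- 1 - e^{-t} ≥ t e^{-t}
      have hinv : Real.exp (-(δ * g)) = (Real.exp (δ * g))⁻¹ := by
        rw [← Real.exp_neg]
      have hEpos : 0 < Real.exp (δ * g) := Real.exp_pos _
      have h3 : δ * g * Real.exp (-(δ * g)) ≤ 1 - Real.exp (-(δ * g)) := by
        rw [hinv]
        have hmm := mul_le_mul_of_nonneg_right hexp (inv_pos.mpr hEpos).le
        rw [mul_inv_cancel₀ hEpos.ne'] at hmm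
        have hex : (1 + δ * g) * (Real.exp (δ * g))⁻¹
            = (Real.exp (δ * g))⁻¹ + δ * g * (Real.exp (δ * g))⁻¹ := by ring
        linarith [hex ▸ hmm]
      have hB2 : Real.exp (δ * g) / δ ≤ B := by
        refine le_trans ?_ hBge
        gcongr
      have hEneg : 0 < Real.exp (-(δ * g)) := Real.exp_pos _
      have h4 : g ≤ (Real.exp (δ * g) / δ) * (1 - Real.exp (-(δ * g))) := by
        have := mul_le_mul_of_nonneg_left h3 (le_of_lt (div_pos hEpos hδ))
        calc g = (Real.exp (δ * g) / δ) * (δ * g * Real.exp (-(δ * g))) := by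
                  rw [hinv]; field_simp
          _ ≤ (Real.exp (δ * g) / δ) * (1 - Real.exp (-(δ * g))) := this
      refine h4.trans ?_
      have h5 : 0 ≤ 1 - Real.exp (-(δ * g)) := by linarith
      nlinarith
    nlinarith
  -- induction from N
  have main : ∀ n, N ≤ n → v n ≤ B := by
    intro n hn
    induction n with
    | zero => simp at hn; omega
    | succ n ih =>
      rcases Nat.lt_or_ge n N with h | h
      · have : N = n + 1 := by omega
        rw [← this]; exact le_max_left _ _
      · have ihB := ih h
        have hn1 : 1 ≤ n := le_trans (le_max_right n₀ 1) h
        have hg : 0 < γ (n + 1) := hpos (n + 1) (by omega)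
        have hgn : 0 < γ n := hpos n hn1
        have hrat := hratio n (le_trans (le_max_left n₀ 1) h)
        have hEpos := Real.exp_pos (-ρ * γ (n + 1))
        have step1 : v n * (γ n / γ (n + 1)) * Real.exp (-ρ * γ (n + 1))
            ≤ v n * Real.exp (-(δ * γ (n + 1))) := by
          have : v n * (γ n / γ (n + 1)) * Real.exp (-ρ * γ (n + 1))
              ≤ v n * Real.exp (c * γ (n + 1)) * Real.exp (-ρ * γ (n + 1)) :=
            mul_le_mul_of_nonneg_right
              (mul_le_mul_of_nonneg_left hrat (hvnn n)) hEpos.le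
          refine this.trans_eq ?_
          rw [mul_assoc, ← Real.exp_add]
          rw [hδdef]; ring_nf
        rw [hvrec n]
        have := key (v n) (γ (n + 1)) (hvnn n) ihB hg (hle1 (n + 1) (by omega))
        linarith
  refine ⟨max B (∑ k ∈ Finset.range (N + 1), v k), fun n => ?_⟩
  rw [abs_of_nonneg (hvnn n)]
  rcases Nat.lt_or_ge n (N + 1) with h | h
  · refine le_trans ?_ (le_max_right _ _)
    exact Finset.single_le_sum (fun i _ => hvnn i) (Finset.mem_range.mpr h)
  · exact le_trans (main n (by omega)) (le_max_left _ _)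
end

section
/- Let b : ℝ^d → ℝ^d be Lipschitz continuous with constant [b]_Lip, and suppose there exist α > 0 and R > 0 such that ⟨b(x) − b(y), x − y⟩ ≤ −α|x − y|^2 for all x, y ∉ B(0,R). Then, setting R_0 = 4R(1 + [b]_Lip/α), for all x, y ∈ ℝ^d with |x − y| ≥ R_0 one has ⟨b(x) − b(y), x − y⟩ ≤ −(α/2)|x − y|^2. In particular ⟨b(x) − b(y), x − y⟩ ≤ [b]_Lip R_0^2 − (α/2)|x − y|^2 for all x, y ∈ ℝ^d. -/
open scoped RealInnerProductSpace

/-- Shifted-point estimate: if `‖x‖ ≤ R` and `2R < t`, `2R < ‖x-y‖`, then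
the dissipativity extends with an error term. -/
lemma stmt4_aux {d : ℕ}
    (b : EuclideanSpace ℝ (Fin d) → EuclideanSpace ℝ (Fin d))
    (L α R : ℝ)
    (hLip : ∀ x y, ‖b x - b y‖ ≤ L * ‖x - y‖)
    (hα : 0 < α) (hR : 0 < R)
    (hdiss : ∀ x y : EuclideanSpace ℝ (Fin d), R < ‖x‖ → R < ‖y‖ →
      ⟪b x - b y, x - y⟫ ≤ -α * ‖x - y‖ ^ 2)
    (t : ℝ) (ht : 2 * R < t)
    (x y : EuclideanSpace ℝ (Fin d)) (hx : ‖x‖ ≤ R) (hr : 2 * R < ‖x - y‖) :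
    ⟪b x - b y, x - y⟫ ≤ L * t * ‖x - y‖ - α * ‖x - y‖ ^ 2 - α * ‖x - y‖ * t := by
  set r : ℝ := ‖x - y‖ with hrdef
  have hr0 : 0 < r := lt_trans (by positivity) hr
  have ht0 : 0 < t := lt_trans (by positivity) ht
  set x' : EuclideanSpace ℝ (Fin d) := x + (t / r) • (x - y) with hx'def
  have hxy' : x' - y = ((r + t) / r) • (x - y) := by
    rw [hx'def]
    have : (r + t) / r = 1 + t / r := by field_simp
    rw [this]
    module
  have hnorm' : ‖x' - y‖ = r + t := by
    rw [hxy', norm_smul, Real.norm_eq_abs, abs_of_pos (by positivity), ← hrdef]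
    field_simp
  have hxx' : x' - x = (t / r) • (x - y) := by rw [hx'def]; abel
  have hnxx' : ‖x' - x‖ = t := by
    rw [hxx', norm_smul, Real.norm_eq_abs, abs_of_pos (by positivity), ← hrdef]
    field_simp
  have hx'R : R < ‖x'‖ := by
    have h1 : ‖x' - x‖ ≤ ‖x'‖ + ‖x‖ := norm_sub_le _ _
    rw [hnxx'] at h1
    linarith
  have hyR : R < ‖y‖ := by
    have h1 : ‖x - y‖ ≤ ‖x‖ + ‖y‖ := norm_sub_le _ _
    rw [← hrdef] at h1
    linarith
  have hd : ⟪b x' - b y, x' - y⟫ ≤ -α * (r + t) ^ 2 := by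
    have := hdiss x' y hx'R hyR
    rwa [hnorm'] at this
  have h2 : ⟪b x' - b y, x - y⟫ ≤ -α * r * (r + t) := by
    have hx'y2 : x - y = (r / (r + t)) • (x' - y) := by
      rw [hxy', smul_smul]
      have : r / (r + t) * ((r + t) / r) = 1 := by field_simp
      rw [this, one_smul]
    calc ⟪b x' - b y, x - y⟫ = (r / (r + t)) * ⟪b x' - b y, x' - y⟫ := by
          rw [hx'y2, real_inner_smul_right]
      _ ≤ (r / (r + t)) * (-α * (r + t) ^ 2) := by
          apply mul_le_mul_of_nonneg_left hd (by positivity)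
      _ = -α * r * (r + t) := by field_simp
  have h3 : ⟪b x - b x', x - y⟫ ≤ L * t * r := by
    calc ⟪b x - b x', x - y⟫ ≤ ‖b x - b x'‖ * ‖x - y‖ := real_inner_le_norm _ _
      _ ≤ (L * ‖x - x'‖) * r := by
          apply mul_le_mul_of_nonneg_right (hLip x x') (norm_nonneg _)
      _ = L * t * r := by rw [← norm_neg, neg_sub, hnxx']
  have hsplit : (b x - b y) = (b x - b x') + (b x' - b y) := by abel
  have := inner_add_left (𝕜 := ℝ) (b x - b x') (b x' - b y) (x - y)
  rw [← hsplit] at this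
  rw [this]
  nlinarith [h2, h3]

/-- If `b : ℝ^d → ℝ^d` is `L`-Lipschitz and `⟨b(x)−b(y), x−y⟩ ≤ −α|x−y|²` for all
`x, y` outside the closed ball `B(0,R)`, then with `R₀ = 4R(1 + L/α)` one has
`⟨b(x)−b(y), x−y⟩ ≤ −(α/2)|x−y|²` whenever `|x−y| ≥ R₀`, and in particular
`⟨b(x)−b(y), x−y⟩ ≤ L R₀² − (α/2)|x−y|²` for all `x, y`. -/
theorem stmt_4 {d : ℕ}
    (b : EuclideanSpace ℝ (Fin d) → EuclideanSpace ℝ (Fin d))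
    (L α R : ℝ) (hL : 0 ≤ L)
    (hLip : ∀ x y, ‖b x - b y‖ ≤ L * ‖x - y‖)
    (hα : 0 < α) (hR : 0 < R)
    (hdiss : ∀ x y : EuclideanSpace ℝ (Fin d), R < ‖x‖ → R < ‖y‖ →
      ⟪b x - b y, x - y⟫ ≤ -α * ‖x - y‖ ^ 2) :
    (∀ x y : EuclideanSpace ℝ (Fin d), 4 * R * (1 + L / α) ≤ ‖x - y‖ →
      ⟪b x - b y, x - y⟫ ≤ -(α / 2) * ‖x - y‖ ^ 2) ∧
    (∀ x y : EuclideanSpace ℝ (Fin d),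
      ⟪b x - b y, x - y⟫ ≤ L * (4 * R * (1 + L / α)) ^ 2 - (α / 2) * ‖x - y‖ ^ 2) := by
  have hLα : 0 < L + α := by linarith
  set R₀ : ℝ := 4 * R * (1 + L / α) with hR₀def
  set t : ℝ := 2 * R + 2 * R * α / (L + α) with htdef
  have ht2R : 2 * R < t := by
    have h : 0 < 2 * R * α / (L + α) := by positivity
    rw [htdef]; linarith
  have ht4R : t ≤ 4 * R := by
    have h : 2 * R * α / (L + α) ≤ 2 * R := by
      rw [div_le_iff₀ hLα]; nlinarith
    rw [htdef]; linarith
  have hR₀4R : 4 * R ≤ R₀ := by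
    have h : (0:ℝ) ≤ L / α := by positivity
    rw [hR₀def]; nlinarith
  have hLt : L * t ≤ α / 2 * R₀ := by
    have h1 : α / 2 * R₀ = 2 * R * α + 2 * R * L := by
      rw [hR₀def]; field_simp; ring
    have h2 : L * (2 * R * α / (L + α)) ≤ 2 * R * α := by
      rw [mul_div_assoc']
      rw [div_le_iff₀ hLα]
      nlinarith [mul_nonneg (mul_nonneg hR.le hα.le) hα.le]
    rw [h1, htdef]; nlinarith
  clear_value R₀ t
  have hR₀0 : 0 < R₀ := by linarith
  have ht0 : 0 < t := by linarith
  clear hR₀def htdef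
  have key : ∀ x y : EuclideanSpace ℝ (Fin d), 2 * R < ‖x - y‖ →
      ⟪b x - b y, x - y⟫ ≤ -α * ‖x - y‖ ^ 2 ∨
      ⟪b x - b y, x - y⟫ ≤ L * t * ‖x - y‖ - α * ‖x - y‖ ^ 2 - α * ‖x - y‖ * t := by
    intro x y hr
    rcases le_or_gt ‖x‖ R with hx | hx
    · exact Or.inr (stmt4_aux b L α R hLip hα hR hdiss t ht2R x y hx hr)
    · rcases le_or_gt ‖y‖ R with hy | hy
      · right
        have hr' : 2 * R < ‖y - x‖ := by rwa [norm_sub_rev]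
        have haux := stmt4_aux b L α R hLip hα hR hdiss t ht2R y x hy hr'
        have heq : ⟪b y - b x, y - x⟫ = ⟪b x - b y, x - y⟫ := by
          rw [show b y - b x = -(b x - b y) by abel, show y - x = -(x - y) by abel,
            inner_neg_neg]
        rw [heq, norm_sub_rev y x] at haux
        exact haux
      · exact Or.inl (hdiss x y hx hy)
  have part1 : ∀ x y : EuclideanSpace ℝ (Fin d), R₀ ≤ ‖x - y‖ →
      ⟪b x - b y, x - y⟫ ≤ -(α / 2) * ‖x - y‖ ^ 2 := by
    intro x y hr
    have hr2R : 2 * R < ‖x - y‖ := by linarith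
    have hrpos : 0 < ‖x - y‖ := by linarith
    rcases key x y hr2R with h | h
    · linarith [mul_nonneg hα.le (sq_nonneg ‖x - y‖)]
    · have h1 : L * t ≤ α / 2 * ‖x - y‖ := by
        have h2 : α / 2 * R₀ ≤ α / 2 * ‖x - y‖ := by nlinarith
        linarith
      have e : L * t * ‖x - y‖ ≤ α / 2 * ‖x - y‖ * ‖x - y‖ :=
        mul_le_mul_of_nonneg_right h1 hrpos.le
      linarith [mul_pos (mul_pos hα hrpos) ht0]
  refine ⟨part1, ?_⟩
  intro x y
  rcases eq_or_lt_of_le (norm_nonneg (x - y)) with hr0 | hr0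
  · have hxy : x - y = 0 := norm_eq_zero.mp hr0.symm
    rw [hxy]
    simp only [inner_zero_right, norm_zero]
    nlinarith [mul_nonneg hL (sq_nonneg R₀), sq_nonneg R₀]
  rcases le_or_gt R₀ ‖x - y‖ with hge | hlt
  · have h := part1 x y hge
    linarith [mul_nonneg hL (sq_nonneg R₀)]
  rcases le_or_gt ‖x - y‖ (2 * R) with hsm | hbig
  · -- small case: first show α ≤ L
    have hαL : α ≤ L := by
      set u : EuclideanSpace ℝ (Fin d) := ‖x - y‖⁻¹ • (x - y) with hudef
      have hu : ‖u‖ = 1 := by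
        rw [hudef, norm_smul, Real.norm_eq_abs, abs_of_pos (by positivity)]
        field_simp
      set x₀ : EuclideanSpace ℝ (Fin d) := (2 * R) • u with hx₀
      set y₀ : EuclideanSpace ℝ (Fin d) := (3 * R) • u with hy₀
      have hnx₀ : ‖x₀‖ = 2 * R := by
        rw [hx₀, norm_smul, hu, Real.norm_eq_abs, abs_of_pos (by positivity)]; ring
      have hny₀ : ‖y₀‖ = 3 * R := by
        rw [hy₀, norm_smul, hu, Real.norm_eq_abs, abs_of_pos (by positivity)]; ring
      have hsub : x₀ - y₀ = (-R) • u := by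
        rw [hx₀, hy₀]; module
      have hnsub : ‖x₀ - y₀‖ = R := by
        rw [hsub, norm_smul, hu, mul_one, Real.norm_eq_abs, abs_neg, abs_of_pos hR]
      have hd := hdiss x₀ y₀ (by rw [hnx₀]; linarith) (by rw [hny₀]; linarith)
      rw [hnsub] at hd
      have hcs : -(L * R * R) ≤ ⟪b x₀ - b y₀, x₀ - y₀⟫ := by
        have h1 : |⟪b x₀ - b y₀, x₀ - y₀⟫| ≤ ‖b x₀ - b y₀‖ * ‖x₀ - y₀‖ :=
          abs_real_inner_le_norm _ _
        have h2 : ‖b x₀ - b y₀‖ * ‖x₀ - y₀‖ ≤ (L * R) * R := by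
          rw [hnsub]
          apply mul_le_mul_of_nonneg_right _ (le_of_lt hR)
          have h3 := hLip x₀ y₀; rwa [hnsub] at h3
        have h4 := neg_abs_le ⟪b x₀ - b y₀, x₀ - y₀⟫
        linarith
      nlinarith [mul_pos hR hR]
    have hlip2 : ⟪b x - b y, x - y⟫ ≤ L * ‖x - y‖ ^ 2 := by
      have h1 := real_inner_le_norm (b x - b y) (x - y)
      have h2 := hLip x y
      nlinarith [norm_nonneg (x - y)]
    have hrR₀ : ‖x - y‖ ≤ R₀ / 2 := by linarith
    have h2 : ‖x - y‖ ^ 2 ≤ (R₀ / 2) ^ 2 :=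
      pow_le_pow_left₀ (norm_nonneg _) hrR₀ 2
    have e1 : L * ‖x - y‖ ^ 2 ≤ L * (R₀ / 2) ^ 2 := mul_le_mul_of_nonneg_left h2 hL
    have e2 : α * ‖x - y‖ ^ 2 ≤ L * (R₀ / 2) ^ 2 :=
      le_trans (mul_le_mul_of_nonneg_right hαL (sq_nonneg _)) e1
    linarith [mul_nonneg hL (sq_nonneg R₀)]
  · -- 2R < ‖x-y‖ < R₀
    have hrpos : 0 < ‖x - y‖ := by linarith
    rcases key x y hbig with h | h
    · linarith [mul_nonneg hL (sq_nonneg R₀), mul_nonneg hα.le (sq_nonneg ‖x - y‖)]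
    · have htR₀ : t ≤ R₀ := le_trans ht4R hR₀4R
      have h1 : L * (t * ‖x - y‖) ≤ L * (R₀ * R₀) :=
        mul_le_mul_of_nonneg_left (mul_le_mul htR₀ hlt.le hrpos.le hR₀0.le) hL
      linarith [mul_nonneg (mul_nonneg hα.le hrpos.le) ht0.le,
        mul_nonneg hα.le (sq_nonneg ‖x - y‖)]
end

section
/- Let V : ℝ^d → (0,∞) be such that √V is Lipschitz continuous with constant [√V]_Lip, and let Φ : ℝ^d → E (E normed) be Borel with |Φ| ≤ C·V^r for some C, r > 0. Then for any ℝ^d-valued random vectors Y, Z with suitable integrability and any p ∈ [1,∞): ‖ sup_{ξ ∈ (Y,Z)} |Φ(ξ)| ‖_p ≤ C' ( ‖V(Y)∧V(Z)‖_{rp}^r + ‖Y − Z‖_{2rp}^{2r} ) for a constant C' depending on Φ, V, r (where (Y,Z) denotes the open segment between Y and Z). -/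
open MeasureTheory

lemma aux_rpow_subadd {x y q : ℝ} (hx : 0 ≤ x) (hy : 0 ≤ y) (hq : 0 ≤ q) (hq1 : q ≤ 1) :
    (x + y) ^ q ≤ x ^ q + y ^ q := by
  lift x to NNReal using hx
  lift y to NNReal using hy
  exact_mod_cast NNReal.rpow_add_le_add_rpow x y hq hq1

lemma aux_add_rpow_le {a b r : ℝ} (ha : 0 ≤ a) (hb : 0 ≤ b) (hr : 0 ≤ r) :
    (a + b) ^ r ≤ 2 ^ r * (a ^ r + b ^ r) := by
  have h1 : a + b ≤ 2 * max a b := by rcases le_total a b with h | h <;>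
    simp [max_eq_right h, max_eq_left h] <;> linarith
  calc (a + b) ^ r ≤ (2 * max a b) ^ r :=
        Real.rpow_le_rpow (by positivity) h1 hr
    _ = 2 ^ r * (max a b) ^ r := Real.mul_rpow (by norm_num) (le_max_of_le_left ha)
    _ ≤ 2 ^ r * (a ^ r + b ^ r) := by
        have : (max a b) ^ r ≤ a ^ r + b ^ r := by
          rcases le_total a b with h | h
          · rw [max_eq_right h]; nlinarith [Real.rpow_nonneg ha r]
          · rw [max_eq_left h]; nlinarith [Real.rpow_nonneg hb r]
        nlinarith [Real.rpow_nonneg (show (0:ℝ) ≤ 2 by norm_num) r]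

set_option maxHeartbeats 1000000 in
/-- Let `√V` be Lipschitz, `V > 0`, and `|Φ| ≤ C·V^r`. Then there is a constant
`C' = C'_{Φ,V,r}` such that for all random vectors `Y, Z` (with suitable
integrability) and every `p ∈ [1,∞)`,
`‖sup_{ξ∈(Y,Z)}|Φ(ξ)|‖_p ≤ C'(‖V(Y)∧V(Z)‖_{rp}^r + ‖Y−Z‖_{2rp}^{2r})`,
the supremum being over the open segment `(Y,Z)`. -/
theorem stmt_15 {d : ℕ} {E : Type*} [NormedAddCommGroup E]
    {Ω : Type*} [MeasurableSpace Ω] (P : Measure Ω) [IsProbabilityMeasure P]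
    (V : EuclideanSpace ℝ (Fin d) → ℝ) (Φ : EuclideanSpace ℝ (Fin d) → E)
    (Lv C r : ℝ) (hLv : 0 ≤ Lv) (hC : 0 < C) (hr : 0 < r)
    (hV : ∀ x, 0 < V x)
    (hVLip : ∀ x y, |Real.sqrt (V x) - Real.sqrt (V y)| ≤ Lv * ‖x - y‖)
    (hΦ : ∀ x, ‖Φ x‖ ≤ C * V x ^ r) :
    ∃ C' : ℝ, 0 < C' ∧
      ∀ (Y Z : Ω → EuclideanSpace ℝ (Fin d)) (p : ℝ), 1 ≤ p →
        Integrable (fun ω => (min (V (Y ω)) (V (Z ω))) ^ (r * p)) P →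
        Integrable (fun ω => ‖Y ω - Z ω‖ ^ (2 * r * p)) P →
        (∫ ω, (⨆ l : Set.Ioo (0 : ℝ) 1,
            ‖Φ ((l : ℝ) • Y ω + (1 - (l : ℝ)) • Z ω)‖) ^ p ∂P) ^ (1 / p) ≤
          C' * (((∫ ω, (min (V (Y ω)) (V (Z ω))) ^ (r * p) ∂P) ^ (1 / (r * p))) ^ r +
            ((∫ ω, ‖Y ω - Z ω‖ ^ (2 * r * p) ∂P) ^ (1 / (2 * r * p))) ^ (2 * r)) := by
  haveI : Nonempty (Set.Ioo (0:ℝ) 1) := ⟨⟨1/2, by norm_num⟩⟩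
  set Cfac : ℝ := C * 2 ^ r * 2 ^ r with hCfac
  have hCfacpos : 0 < Cfac := by positivity
  refine ⟨2 * Cfac * (1 + Lv ^ (2 * r)), by positivity, ?_⟩
  intro Y Z p hp hInt1 hInt2
  have hppos : 0 < p := lt_of_lt_of_le one_pos hp
  set m : Ω → ℝ := fun ω => min (V (Y ω)) (V (Z ω)) with hm
  set D : Ω → ℝ := fun ω => ‖Y ω - Z ω‖ with hD
  have hmpos : ∀ ω, 0 < m ω := fun ω => lt_min (hV _) (hV _)
  have hDnn : ∀ ω, 0 ≤ D ω := fun ω => norm_nonneg _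
  set g : Ω → ℝ := fun ω => Cfac * ((m ω) ^ r + Lv ^ (2 * r) * (D ω) ^ (2 * r)) with hg
  -- pointwise bound on each term of the sup
  have key : ∀ ω (l : Set.Ioo (0:ℝ) 1),
      ‖Φ ((l : ℝ) • Y ω + (1 - (l : ℝ)) • Z ω)‖ ≤ g ω := by
    intro ω l
    obtain ⟨l, hl0, hl1⟩ := l
    set ξ : EuclideanSpace ℝ (Fin d) := l • Y ω + (1 - l) • Z ω with hξ
    have hsq : Real.sqrt (V ξ) ≤ Real.sqrt (m ω) + Lv * D ω := by
      rcases min_cases (V (Y ω)) (V (Z ω)) with ⟨he, _⟩ | ⟨he, _⟩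
      · have hdiff : ξ - Y ω = (1 - l) • (Z ω - Y ω) := by
          simp only [hξ]; module
        have hnorm : ‖ξ - Y ω‖ ≤ D ω := by
          rw [hdiff, norm_smul, Real.norm_eq_abs, abs_of_pos (by linarith)]
          have : ‖Z ω - Y ω‖ = D ω := by rw [hD]; exact norm_sub_rev _ _
          nlinarith [norm_nonneg (Z ω - Y ω)]
        have := hVLip ξ (Y ω)
        rw [abs_sub_le_iff] at this
        have h2 : Lv * ‖ξ - Y ω‖ ≤ Lv * D ω := by nlinarith
        simp only [hm, he]
        linarith [this.1]
      · have hdiff : ξ - Z ω = l • (Y ω - Z ω) := by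
          simp only [hξ]; module
        have hnorm : ‖ξ - Z ω‖ ≤ D ω := by
          rw [hdiff, norm_smul, Real.norm_eq_abs, abs_of_pos hl0]
          nlinarith [norm_nonneg (Y ω - Z ω), hDnn ω]
        have := hVLip ξ (Z ω)
        rw [abs_sub_le_iff] at this
        have h2 : Lv * ‖ξ - Z ω‖ ≤ Lv * D ω := by nlinarith
        simp only [hm, he]
        linarith [this.1]
    have hVle : V ξ ≤ 2 * (m ω + (Lv * D ω) ^ 2) := by
      have h1 : V ξ = Real.sqrt (V ξ) ^ 2 := (Real.sq_sqrt (hV ξ).le).symm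
      have h2 : Real.sqrt (m ω) ^ 2 = m ω := Real.sq_sqrt (hmpos ω).le
      have h3 : Real.sqrt (V ξ) * Real.sqrt (V ξ) ≤
          (Real.sqrt (m ω) + Lv * D ω) * (Real.sqrt (m ω) + Lv * D ω) :=
        mul_le_mul hsq hsq (Real.sqrt_nonneg _)
          (by positivity)
      nlinarith [sq_nonneg (Real.sqrt (m ω) - Lv * D ω)]
    have step1 : V ξ ^ r ≤ 2 ^ r * (m ω + (Lv * D ω) ^ 2) ^ r := by
      calc V ξ ^ r ≤ (2 * (m ω + (Lv * D ω) ^ 2)) ^ r :=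
            Real.rpow_le_rpow (hV ξ).le hVle hr.le
        _ = 2 ^ r * (m ω + (Lv * D ω) ^ 2) ^ r :=
            Real.mul_rpow (by norm_num) (add_nonneg (hmpos ω).le (sq_nonneg _))
    have step2 : (m ω + (Lv * D ω) ^ 2) ^ r ≤
        2 ^ r * ((m ω) ^ r + Lv ^ (2 * r) * (D ω) ^ (2 * r)) := by
      have h3 : ((Lv * D ω) ^ 2 : ℝ) ^ r = Lv ^ (2 * r) * (D ω) ^ (2 * r) := by
        rw [show ((Lv * D ω) ^ 2 : ℝ) = (Lv * D ω) ^ (2:ℝ) by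
            rw [← Real.rpow_natCast (Lv * D ω) 2]; norm_num,
          ← Real.rpow_mul (by positivity),
          Real.mul_rpow hLv (hDnn ω)]
      calc (m ω + (Lv * D ω) ^ 2) ^ r
          ≤ 2 ^ r * ((m ω) ^ r + ((Lv * D ω) ^ 2) ^ r) :=
            aux_add_rpow_le (hmpos ω).le (sq_nonneg _) hr.le
        _ = 2 ^ r * ((m ω) ^ r + Lv ^ (2 * r) * (D ω) ^ (2 * r)) := by rw [h3]
    calc ‖Φ ξ‖ ≤ C * V ξ ^ r := hΦ ξ
      _ ≤ C * (2 ^ r * (2 ^ r * ((m ω) ^ r + Lv ^ (2 * r) * (D ω) ^ (2 * r)))) := by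
          have h4 : (0:ℝ) < 2 ^ r := by positivity
          calc C * V ξ ^ r ≤ C * (2 ^ r * (m ω + (Lv * D ω) ^ 2) ^ r) := by nlinarith
            _ ≤ C * (2 ^ r * (2 ^ r * ((m ω) ^ r + Lv ^ (2 * r) * (D ω) ^ (2 * r)))) := by
                nlinarith [Real.rpow_nonneg (add_nonneg (hmpos ω).le (sq_nonneg (Lv * D ω))) r]
      _ = g ω := by rw [hg, hCfac]; ring
  have hgnn : ∀ ω, 0 ≤ g ω := by
    intro ω
    have := (key ω ⟨1/2, by norm_num⟩)
    exact le_trans (norm_nonneg _) this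
  set S : Ω → ℝ := fun ω => ⨆ l : Set.Ioo (0:ℝ) 1,
    ‖Φ ((l : ℝ) • Y ω + (1 - (l : ℝ)) • Z ω)‖ with hS
  have hbdd : ∀ ω, BddAbove (Set.range fun l : Set.Ioo (0:ℝ) 1 =>
      ‖Φ ((l : ℝ) • Y ω + (1 - (l : ℝ)) • Z ω)‖) := by
    intro ω; exact ⟨g ω, by rintro x ⟨l, rfl⟩; exact key ω l⟩
  have hSle : ∀ ω, S ω ≤ g ω := fun ω => ciSup_le (key ω)
  have hSnn : ∀ ω, 0 ≤ S ω := by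
    intro ω
    exact le_trans (norm_nonneg _) (le_ciSup (hbdd ω) ⟨1/2, by norm_num⟩)
  -- the dominating integrable function
  set K : ℝ := (2 * Cfac) ^ p with hK
  have hKpos : 0 < K := by positivity
  set h : Ω → ℝ := fun ω => K * (m ω) ^ (r * p) + K * Lv ^ (2 * r * p) * (D ω) ^ (2 * r * p)
    with hh
  have hpoint : ∀ ω, S ω ^ p ≤ h ω := by
    intro ω
    have h1 : S ω ^ p ≤ g ω ^ p := Real.rpow_le_rpow (hSnn ω) (hSle ω) hppos.le
    have hgval : g ω ^ p = Cfac ^ p * ((m ω) ^ r + Lv ^ (2 * r) * (D ω) ^ (2 * r)) ^ p := by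
      rw [hg, Real.mul_rpow hCfacpos.le (add_nonneg (Real.rpow_nonneg (hmpos ω).le r)
          (mul_nonneg (Real.rpow_nonneg hLv _) (Real.rpow_nonneg (hDnn ω) _)))]
    have h2 : ((m ω) ^ r + Lv ^ (2 * r) * (D ω) ^ (2 * r)) ^ p ≤
        2 ^ p * (((m ω) ^ r) ^ p + (Lv ^ (2 * r) * (D ω) ^ (2 * r)) ^ p) :=
      aux_add_rpow_le (Real.rpow_nonneg (hmpos ω).le r)
        (mul_nonneg (Real.rpow_nonneg hLv _) (Real.rpow_nonneg (hDnn ω) _)) hppos.le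
    have e1 : ((m ω) ^ r) ^ p = (m ω) ^ (r * p) := (Real.rpow_mul (hmpos ω).le r p).symm
    have e2 : (Lv ^ (2 * r) * (D ω) ^ (2 * r)) ^ p = Lv ^ (2 * r * p) * (D ω) ^ (2 * r * p) := by
      rw [Real.mul_rpow (Real.rpow_nonneg hLv _) (Real.rpow_nonneg (hDnn ω) _),
        ← Real.rpow_mul hLv, ← Real.rpow_mul (hDnn ω)]
    have e3 : K = Cfac ^ p * 2 ^ p := by
      rw [hK, Real.mul_rpow (by norm_num) hCfacpos.le]; ring
    calc S ω ^ p ≤ g ω ^ p := h1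
      _ = Cfac ^ p * ((m ω) ^ r + Lv ^ (2 * r) * (D ω) ^ (2 * r)) ^ p := hgval
      _ ≤ Cfac ^ p * (2 ^ p * (((m ω) ^ r) ^ p + (Lv ^ (2 * r) * (D ω) ^ (2 * r)) ^ p)) := by
          have : (0:ℝ) < Cfac ^ p := by positivity
          nlinarith
      _ = h ω := by rw [hh, e1, e2, e3]; ring
  have hhInt : Integrable h P := by
    refine Integrable.add ?_ ?_
    · exact hInt1.const_mul K
    · exact hInt2.const_mul (K * Lv ^ (2 * r * p))
  set A : ℝ := ∫ ω, (m ω) ^ (r * p) ∂P with hA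
  set B : ℝ := ∫ ω, (D ω) ^ (2 * r * p) ∂P with hB
  have hAnn : 0 ≤ A := integral_nonneg fun ω => Real.rpow_nonneg (hmpos ω).le _
  have hBnn : 0 ≤ B := integral_nonneg fun ω => Real.rpow_nonneg (hDnn ω) _
  have hIntS : (∫ ω, S ω ^ p ∂P) ≤ K * A + K * Lv ^ (2 * r * p) * B := by
    have := integral_mono_of_nonneg (f := fun ω => S ω ^ p) (g := h)
      (Filter.Eventually.of_forall fun ω => Real.rpow_nonneg (hSnn ω) p) hhInt
      (Filter.Eventually.of_forall hpoint)
    refine le_trans this (le_of_eq ?_)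
    rw [hh, integral_add (hInt1.const_mul K) (hInt2.const_mul (K * Lv ^ (2 * r * p))),
      integral_const_mul, integral_const_mul]
  have hIntSnn : 0 ≤ ∫ ω, S ω ^ p ∂P :=
    integral_nonneg fun ω => Real.rpow_nonneg (hSnn ω) p
  -- take p-th roots
  have hstep : (∫ ω, S ω ^ p ∂P) ^ (1 / p) ≤
      2 * Cfac * (A ^ (1 / p) + Lv ^ (2 * r) * B ^ (1 / p)) := by
    have h1 : (∫ ω, S ω ^ p ∂P) ^ (1 / p) ≤ (K * A + K * Lv ^ (2 * r * p) * B) ^ (1 / p) :=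
      Real.rpow_le_rpow hIntSnn hIntS (one_div_nonneg.2 hppos.le)
    have h2 : (K * A + K * Lv ^ (2 * r * p) * B) ^ (1 / p) ≤
        (K * A) ^ (1 / p) + (K * Lv ^ (2 * r * p) * B) ^ (1 / p) :=
      aux_rpow_subadd (mul_nonneg hKpos.le hAnn)
        (mul_nonneg (mul_nonneg hKpos.le (Real.rpow_nonneg hLv _)) hBnn)
        (one_div_nonneg.2 hppos.le) (by rw [div_le_one hppos]; exact hp)
    have eK : K ^ (1 / p) = 2 * Cfac := by
      rw [hK, ← Real.rpow_mul (by linarith : (0:ℝ) ≤ 2 * Cfac), mul_one_div,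
        div_self hppos.ne', Real.rpow_one]
    have eL : (Lv ^ (2 * r * p)) ^ (1 / p) = Lv ^ (2 * r) := by
      rw [← Real.rpow_mul hLv]
      congr 1
      field_simp
    have e1 : (K * A) ^ (1 / p) = 2 * Cfac * A ^ (1 / p) := by
      rw [Real.mul_rpow hKpos.le hAnn, eK]
    have e2 : (K * Lv ^ (2 * r * p) * B) ^ (1 / p) =
        2 * Cfac * (Lv ^ (2 * r) * B ^ (1 / p)) := by
      rw [Real.mul_rpow (mul_nonneg hKpos.le (Real.rpow_nonneg hLv _)) hBnn,
        Real.mul_rpow hKpos.le (Real.rpow_nonneg hLv _), eK, eL]; ring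
    calc (∫ ω, S ω ^ p ∂P) ^ (1 / p)
        ≤ (K * A) ^ (1 / p) + (K * Lv ^ (2 * r * p) * B) ^ (1 / p) := le_trans h1 h2
      _ = 2 * Cfac * (A ^ (1 / p) + Lv ^ (2 * r) * B ^ (1 / p)) := by rw [e1, e2]; ring
  -- rewrite the RHS
  have eA : (A ^ (1 / (r * p))) ^ r = A ^ (1 / p) := by
    rw [← Real.rpow_mul hAnn]
    congr 1
    field_simp
  have eB : (B ^ (1 / (2 * r * p))) ^ (2 * r) = B ^ (1 / p) := by
    rw [← Real.rpow_mul hBnn]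
    congr 1
    field_simp
  calc (∫ ω, S ω ^ p ∂P) ^ (1 / p)
      ≤ 2 * Cfac * (A ^ (1 / p) + Lv ^ (2 * r) * B ^ (1 / p)) := hstep
    _ ≤ 2 * Cfac * (1 + Lv ^ (2 * r)) * (A ^ (1 / p) + B ^ (1 / p)) := by
        nlinarith [mul_nonneg (mul_nonneg hCfacpos.le (Real.rpow_nonneg hLv (2 * r)))
            (Real.rpow_nonneg hAnn (1 / p)),
          mul_nonneg hCfacpos.le (Real.rpow_nonneg hBnn (1 / p))]
    _ = 2 * Cfac * (1 + Lv ^ (2 * r)) *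
        ((A ^ (1 / (r * p))) ^ r + (B ^ (1 / (2 * r * p))) ^ (2 * r)) := by
        rw [eA, eB]
end

section
/- Let φ, ψ : [0,T] → ℝ_+ be non-decreasing with φ(t) ≤ ψ(t) + K₁∫_0^t φ(s)ds + K₂ (∫_0^t φ(s)^2 ds)^{1/2} for all t ∈ [0,T], where K₁, K₂ ≥ 0 and φ is bounded. Then φ(t) ≤ 2 e^{(2K₁ + K₂²)t} ψ(t) for all t ∈ [0,T]. -/
set_option maxHeartbeats 1000000

/-- helper: ∫₀ᵗ exp(C s) ds = (exp(Ct) - 1)/C for C ≠ 0. -/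
lemma int_exp_mul (C t : ℝ) (hC : C ≠ 0) :
    ∫ s in (0:ℝ)..t, Real.exp (C * s) = (Real.exp (C * t) - 1) / C := by
  have h := intervalIntegral.integral_comp_mul_left (a := (0:ℝ)) (b := t)
    (fun x => Real.exp x) hC
  simp only [mul_zero, integral_exp, Real.exp_zero, smul_eq_mul] at h
  rw [h]
  field_simp

/-- Gronwall-type lemma: if `φ, ψ : [0,T] → ℝ₊` are non-decreasing, `φ` bounded, and
`φ(t) ≤ ψ(t) + K₁∫_0^t φ + K₂(∫_0^t φ²)^{1/2}` on `[0,T]` with `K₁, K₂ ≥ 0`, then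
`φ(t) ≤ 2 e^{(2K₁ + K₂²)t} ψ(t)` on `[0,T]`. -/
theorem stmt_18 (T K₁ K₂ : ℝ) (hT : 0 ≤ T) (hK₁ : 0 ≤ K₁) (hK₂ : 0 ≤ K₂)
    (φ ψ : ℝ → ℝ)
    (hφ0 : ∀ t ∈ Set.Icc 0 T, 0 ≤ φ t) (hψ0 : ∀ t ∈ Set.Icc 0 T, 0 ≤ ψ t)
    (hφmono : MonotoneOn φ (Set.Icc 0 T)) (hψmono : MonotoneOn ψ (Set.Icc 0 T))
    (hφbdd : BddAbove (φ '' Set.Icc 0 T))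
    (hineq : ∀ t ∈ Set.Icc 0 T,
      φ t ≤ ψ t + K₁ * (∫ s in (0 : ℝ)..t, φ s) +
        K₂ * Real.sqrt (∫ s in (0 : ℝ)..t, (φ s) ^ 2)) :
    ∀ t ∈ Set.Icc 0 T, φ t ≤ 2 * Real.exp ((2 * K₁ + K₂ ^ 2) * t) * ψ t := by
  set C : ℝ := 2 * K₁ + K₂ ^ 2 with hCdef
  have hC0 : 0 ≤ C := by positivity
  -- bound M for φ
  obtain ⟨M, hM⟩ := hφbdd
  have hMb : ∀ s ∈ Set.Icc 0 T, φ s ≤ M := fun s hs => hM ⟨s, hs, rfl⟩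
  have h0T : (0:ℝ) ∈ Set.Icc 0 T := ⟨le_refl 0, hT⟩
  have hM0 : 0 ≤ M := le_trans (hφ0 0 h0T) (hMb 0 h0T)
  -- interval integrability of φ on [0,t]
  have intφ : ∀ t ∈ Set.Icc 0 T, IntervalIntegrable φ MeasureTheory.volume 0 t := by
    intro t ht
    apply MonotoneOn.intervalIntegrable
    rw [Set.uIcc_of_le ht.1]
    exact hφmono.mono (Set.Icc_subset_Icc le_rfl ht.2)
  -- key reduction: φ t ≤ 2 ψ t + C ∫₀ᵗ φ
  have key : ∀ t ∈ Set.Icc 0 T, φ t ≤ 2 * ψ t + C * ∫ s in (0:ℝ)..t, φ s := by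
    intro t ht
    have ht0 : (0:ℝ) ≤ t := ht.1
    have hsub : Set.Icc (0:ℝ) t ⊆ Set.Icc 0 T := Set.Icc_subset_Icc le_rfl ht.2
    set I : ℝ := ∫ s in (0:ℝ)..t, φ s with hI
    have hInn : 0 ≤ I := intervalIntegral.integral_nonneg ht0 (fun s hs => hφ0 s (hsub hs))
    have intφ2 : IntervalIntegrable (fun s => (φ s)^2) MeasureTheory.volume 0 t := by
      apply MonotoneOn.intervalIntegrable
      rw [Set.uIcc_of_le ht0]
      intro a ha b hb hab
      have h1 := hφmono (hsub ha) (hsub hb) hab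
      have h2 := hφ0 a (hsub ha)
      dsimp only
      nlinarith
    have h1 : (∫ s in (0:ℝ)..t, (φ s)^2) ≤ φ t * I := by
      rw [hI, ← intervalIntegral.integral_const_mul]
      apply intervalIntegral.integral_mono_on ht0 intφ2 ((intφ t ht).const_mul (φ t))
      intro s hs
      have h := hφmono (hsub hs) ht hs.2
      have h0 := hφ0 s (hsub hs)
      nlinarith
    have h2 : Real.sqrt (∫ s in (0:ℝ)..t, (φ s)^2) ≤
        Real.sqrt (φ t) * Real.sqrt I := by
      rw [← Real.sqrt_mul (hφ0 t ht)]
      exact Real.sqrt_le_sqrt h1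
    have h3 : K₂ * (Real.sqrt (φ t) * Real.sqrt I) ≤ φ t / 2 + K₂^2 * I / 2 := by
      nlinarith [sq_nonneg (Real.sqrt (φ t) - K₂ * Real.sqrt I),
        Real.sq_sqrt (hφ0 t ht), Real.sq_sqrt hInn,
        Real.sqrt_nonneg (φ t), Real.sqrt_nonneg I]
    have h4 := hineq t ht
    have h5 : K₂ * Real.sqrt (∫ s in (0:ℝ)..t, (φ s)^2) ≤
        K₂ * (Real.sqrt (φ t) * Real.sqrt I) := by
      exact mul_le_mul_of_nonneg_left h2 hK₂
    rw [hCdef]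
    linarith
  intro t ht
  -- case C = 0
  rcases eq_or_lt_of_le hC0 with hCz | hCpos
  · have hk := key t ht
    rw [← hCz] at hk ⊢
    simp only [zero_mul, Real.exp_zero, mul_one, add_zero] at hk ⊢
    linarith
  · -- C > 0: Gronwall iteration
    have hCne : C ≠ 0 := ne_of_gt hCpos
    have ind : ∀ n : ℕ, ∀ u ∈ Set.Icc 0 T,
        φ u ≤ 2 * ψ u * Real.exp (C * u) + M * (C * u)^n / n.factorial := by
      intro n
      induction n with
      | zero =>
        intro u hu
        have := hMb u hu
        have h1 : 0 ≤ 2 * ψ u * Real.exp (C * u) := by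
          have := hψ0 u hu; positivity
        simp only [pow_zero, Nat.factorial_zero, Nat.cast_one]
        linarith
      | succ n ih =>
        intro u hu
        have hu0 : (0:ℝ) ≤ u := hu.1
        have hsub : Set.Icc (0:ℝ) u ⊆ Set.Icc 0 T := Set.Icc_subset_Icc le_rfl hu.2
        set g1 : ℝ → ℝ := fun s => 2 * ψ s * Real.exp (C * s) with hg1
        set g2 : ℝ → ℝ := fun s => M * (C * s)^n / n.factorial with hg2
        have hg1mono : MonotoneOn g1 (Set.Icc 0 T) := by
          intro a ha b hb hab
          have h1 := hψmono ha hb hab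
          have h2 : Real.exp (C * a) ≤ Real.exp (C * b) := by
            apply Real.exp_le_exp.2; exact mul_le_mul_of_nonneg_left hab hC0
          have h3 := hψ0 a ha
          simp only [hg1]
          have := Real.exp_nonneg (C * a)
          nlinarith
        have intg1 : IntervalIntegrable g1 MeasureTheory.volume 0 u := by
          apply MonotoneOn.intervalIntegrable
          rw [Set.uIcc_of_le hu0]
          exact hg1mono.mono hsub
        have intg2 : IntervalIntegrable g2 MeasureTheory.volume 0 u := by
          apply Continuous.intervalIntegrable
          exact (continuous_const.mul ((continuous_const.mul continuous_id).pow n)).div_const _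
        have hIg : (∫ s in (0:ℝ)..u, φ s) ≤ ∫ s in (0:ℝ)..u, (g1 s + g2 s) := by
          apply intervalIntegral.integral_mono_on hu0 (intφ u hu) (intg1.add intg2)
          intro s hs
          exact ih s (hsub hs)
        have hsplit : (∫ s in (0:ℝ)..u, (g1 s + g2 s))
            = (∫ s in (0:ℝ)..u, g1 s) + ∫ s in (0:ℝ)..u, g2 s :=
          intervalIntegral.integral_add intg1 intg2
        have hb1 : (∫ s in (0:ℝ)..u, g1 s) ≤ 2 * ψ u * ((Real.exp (C * u) - 1) / C) := by
          have hcont : Continuous (fun s : ℝ => (2 * ψ u) * Real.exp (C * s)) := by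
            fun_prop
          have step1 : (∫ s in (0:ℝ)..u, g1 s)
              ≤ ∫ s in (0:ℝ)..u, (2 * ψ u) * Real.exp (C * s) := by
            apply intervalIntegral.integral_mono_on hu0 intg1
            · exact hcont.intervalIntegrable 0 u
            · intro s hs
              have h1 := hψmono (hsub hs) hu hs.2
              have := Real.exp_nonneg (C * s)
              simp only [hg1]
              nlinarith
          have step2 : (∫ s in (0:ℝ)..u, (2 * ψ u) * Real.exp (C * s))
              = 2 * ψ u * ((Real.exp (C * u) - 1) / C) := by
            rw [intervalIntegral.integral_const_mul, int_exp_mul C u hCne]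
          linarith [step1, step2.le]
        have hb2 : (∫ s in (0:ℝ)..u, g2 s)
            = M * C^n / n.factorial * (u^(n+1) / (n+1)) := by
          have : ∀ s : ℝ, g2 s = (M * C^n / n.factorial) * s^n := by
            intro s; simp only [hg2, mul_pow]; ring
          simp_rw [this]
          rw [intervalIntegral.integral_const_mul, integral_pow]
          simp
        have hkey := key u hu
        have hfac : ((n+1 : ℕ).factorial : ℝ) = (n+1) * n.factorial := by
          rw [Nat.factorial_succ]; push_cast; ring
        have hfacpos : (0:ℝ) < n.factorial := by positivity
        have hIle : (∫ s in (0:ℝ)..u, φ s)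
            ≤ 2 * ψ u * ((Real.exp (C * u) - 1) / C)
              + M * C^n / n.factorial * (u^(n+1) / (n+1)) := by
          rw [hsplit] at hIg
          linarith [hb1, hb2.le, hb2.ge]
        have hCI : C * (∫ s in (0:ℝ)..u, φ s)
            ≤ 2 * ψ u * (Real.exp (C * u) - 1)
              + M * (C * u)^(n+1) / (n+1).factorial := by
          have h := mul_le_mul_of_nonneg_left hIle hC0
          have e1 : C * (2 * ψ u * ((Real.exp (C * u) - 1) / C))
              = 2 * ψ u * (Real.exp (C * u) - 1) := by
            field_simp
          have e2 : C * (M * C^n / n.factorial * (u^(n+1) / (n+1)))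
              = M * (C * u)^(n+1) / (n+1).factorial := by
            rw [mul_pow, hfac]
            field_simp
            ring
          calc C * (∫ s in (0:ℝ)..u, φ s)
              ≤ C * (2 * ψ u * ((Real.exp (C * u) - 1) / C)
                + M * C^n / n.factorial * (u^(n+1) / (n+1))) := h
            _ = 2 * ψ u * (Real.exp (C * u) - 1)
                + M * (C * u)^(n+1) / (n+1).factorial := by rw [mul_add, e1, e2]
        have hfin := hkey.trans (by linarith : 2 * ψ u + C * (∫ s in (0:ℝ)..u, φ s)
          ≤ 2 * ψ u + (2 * ψ u * (Real.exp (C * u) - 1)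
            + M * (C * u)^(n+1) / (n+1).factorial))
        push_cast at hfin ⊢
        linarith
    -- take n → ∞
    have hlim : Filter.Tendsto (fun n : ℕ => 2 * ψ t * Real.exp (C * t)
        + M * (C * t)^n / n.factorial) Filter.atTop
        (nhds (2 * ψ t * Real.exp (C * t))) := by
      have h1 : Filter.Tendsto (fun n : ℕ => M * (C * t)^n / n.factorial)
          Filter.atTop (nhds 0) := by
        have := (FloorSemiring.tendsto_pow_div_factorial_atTop (C * t)).const_mul M
        simpa [mul_div_assoc] using this
      simpa using (tendsto_const_nhds.add h1)
    have := ge_of_tendsto' hlim (fun n => ind n t ht)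
    linarith
end
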